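/- Let G be a finite group, N ≤ G a subgroup, and k an algebraically closed field of characteristic zero. Suppose there exists N₀ > 0 such that ⟨Ind Res Ind α, χ⟩_G ≤ N₀·⟨Ind α, χ⟩_G for all irreducible characters α of N and χ of G. Then N is normal in G. -/

import Mathlib

open scoped Classical

section GroupDefs

variable (k : Type) [Field k]

/-- A finite-dimensional representation of a group `G` over `k`. -/
structure GFinRep (G : Type) [Group G] where
  V : Type
  [acg : AddCommGroup V]
  [mod : Module k V]
  [fin : Module.Finite k V]
  ρ : G →* (V →ₗ[k] V)

attribute [instance] GFinRep.acg GFinRep.mod GFinRep.fin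

variable {G : Type} [Group G]

/-- The character of a finite-dimensional representation of a group. -/
noncomputable def GFinRep.chr (r : GFinRep k G) : G → k :=
  fun g => LinearMap.trace k r.V (r.ρ g)

/-- Irreducibility: the space is nontrivial and has no proper nonzero invariant subspaces. -/
def GFinRep.IsIrred (r : GFinRep k G) : Prop :=
  Nontrivial r.V ∧ ∀ W : Submodule k r.V, (∀ g : G, ∀ v ∈ W, r.ρ g v ∈ W) → W = ⊥ ∨ W = ⊤

/-- An irreducible character of the group `G` over `k`. -/
def IsIrrCharG (φ : G → k) : Prop :=
  ∃ r : GFinRep k G, GFinRep.IsIrred k r ∧ φ = GFinRep.chr k r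

variable (G)

/-- The induced class function: `(Ind f)(g) = |N|⁻¹ ∑_{x ∈ G, x⁻¹gx ∈ N} f(x⁻¹gx)`. -/
noncomputable def indCF [Fintype G] (N : Subgroup G) (f : ↥N → k) : G → k :=
  fun g => (Nat.card ↥N : k)⁻¹ * ∑ x : G, if h : x⁻¹ * g * x ∈ N then f ⟨x⁻¹ * g * x, h⟩ else 0

/-- Restriction of a class function on `G` to the subgroup `N`. -/
def resCF (N : Subgroup G) (F : G → k) : ↥N → k :=
  fun n => F (n : G)

/-- The inner product (multiplicity pairing) of class functions on a finite group,
over a field of characteristic zero. -/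
noncomputable def innerCF [Fintype G] (φ ψ : G → k) : k :=
  (Nat.card G : k)⁻¹ * ∑ g : G, φ g * ψ g⁻¹

end GroupDefs

section Aux

variable {k : Type} [Field k]

/-- Fixed points of a representation. -/
def fixPts {H V : Type} [Monoid H] [AddCommGroup V] [Module k V]
    (ρ : H →* (V →ₗ[k] V)) : Submodule k V where
  carrier := {v | ∀ h, ρ h v = v}
  add_mem' := by intro a b ha hb h; rw [map_add, ha h, hb h]
  zero_mem' := fun h => map_zero _
  smul_mem' := by intro c v hv h; rw [map_smul, hv h]

lemma mem_fixPts {H V : Type} [Monoid H] [AddCommGroup V] [Module k V]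
    (ρ : H →* (V →ₗ[k] V)) (v : V) : v ∈ fixPts ρ ↔ ∀ h, ρ h v = v := Iff.rfl

lemma sum_trace_eq [CharZero k] {H V : Type} [Group H] [Fintype H] [AddCommGroup V] [Module k V]
    [Module.Finite k V] (ρ : H →* (V →ₗ[k] V)) :
    ∑ h : H, LinearMap.trace k V (ρ h)
      = (Fintype.card H : k) * (Module.finrank k (fixPts ρ) : k) := by
  have hc : (Fintype.card H : k) ≠ 0 := Nat.cast_ne_zero.2 Fintype.card_ne_zero
  set e : V →ₗ[k] V := (Fintype.card H : k)⁻¹ • ∑ h : H, ρ h with he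
  have hsum : ∀ (h₀ : H) (v : V), ρ h₀ ((∑ h : H, ρ h) v) = (∑ h : H, ρ h) v := by
    intro h₀ v
    rw [LinearMap.sum_apply, map_sum]
    exact Fintype.sum_equiv (Equiv.mulLeft h₀) _ _ (fun h => by
      rw [← Module.End.mul_apply, ← map_mul]; rfl)
  have hmem : ∀ v, e v ∈ fixPts ρ := by
    intro v h₀
    show ρ h₀ (e v) = e v
    rw [he]
    simp only [LinearMap.smul_apply, map_smul]
    rw [hsum]
  have hid : ∀ v ∈ fixPts ρ, e v = v := by
    intro v hv
    rw [he]
    simp only [LinearMap.smul_apply, LinearMap.sum_apply]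
    rw [Finset.sum_congr rfl (fun h _ => hv h), Finset.sum_const, Finset.card_univ,
      ← Nat.cast_smul_eq_nsmul k, smul_smul, inv_mul_cancel₀ hc, one_smul]
  have hproj : LinearMap.IsProj (fixPts ρ) e := ⟨hmem, hid⟩
  have htr : LinearMap.trace k V e = (Module.finrank k (fixPts ρ) : k) := hproj.trace
  have h2 : LinearMap.trace k V e
      = (Fintype.card H : k)⁻¹ * ∑ h : H, LinearMap.trace k V (ρ h) := by
    rw [he, map_smul, map_sum]; rfl
  rw [h2] at htr
  field_simp at htr
  rw [htr, mul_comm]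

lemma sum_dite_mem {G : Type} [Group G] [Fintype G] {M : Type} [AddCommMonoid M]
    (N : Subgroup G) (f : ↥N → M) :
    ∑ y : G, (if h : y ∈ N then f ⟨y, h⟩ else 0) = ∑ n : ↥N, f n := by
  rw [← Finset.sum_subset (Finset.filter_subset (· ∈ N) Finset.univ)
    (fun x _ hx => dif_neg (by simpa using hx))]
  rw [Finset.sum_subtype (p := (· ∈ N)) (Finset.univ.filter (· ∈ N)) (by simp) _]
  exact Finset.sum_congr rfl (fun n _ => by rw [dif_pos n.2])

variable [CharZero k]

lemma maschke_rel {H V : Type} [Group H] [Fintype H] [AddCommGroup V] [Module k V]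
    [Module.Finite k V] (ρ : H →* (V →ₗ[k] V)) (A B : Submodule k V)
    (hA : ∀ h : H, ∀ v ∈ A, ρ h v ∈ A) (hB : ∀ h : H, ∀ v ∈ B, ρ h v ∈ B)
    (hAB : A ≤ B) :
    ∃ C : Submodule k V, (∀ h : H, ∀ v ∈ C, ρ h v ∈ C) ∧ C ≤ B ∧ A ⊓ C = ⊥ ∧ A ⊔ C = B := by
  have hc : (Fintype.card H : k) ≠ 0 := Nat.cast_ne_zero.2 Fintype.card_ne_zero
  obtain ⟨D, hD⟩ := Submodule.exists_isCompl A
  set S : V →ₗ[k] V := A.subtype ∘ₗ (A.projectionOnto D hD) with hS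
  have hSA : ∀ v, S v ∈ A := fun v => (A.projectionOnto D hD v).2
  have hSid : ∀ v ∈ A, S v = v := by
    intro v hv
    show (A.subtype) (A.projectionOnto D hD v) = v
    rw [Submodule.projectionOnto_apply_left hD ⟨v, hv⟩]
    rfl
  set π : V →ₗ[k] V :=
    (Fintype.card H : k)⁻¹ • ∑ h : H, (ρ h) ∘ₗ S ∘ₗ (ρ h⁻¹) with hπ
  have hπA : ∀ v, π v ∈ A := by
    intro v
    rw [hπ]
    simp only [LinearMap.smul_apply, LinearMap.sum_apply, LinearMap.comp_apply]
    exact A.smul_mem _ (Submodule.sum_mem _ (fun h _ => hA h _ (hSA _)))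
  have hπid : ∀ v ∈ A, π v = v := by
    intro v hv
    rw [hπ]
    simp only [LinearMap.smul_apply, LinearMap.sum_apply, LinearMap.comp_apply]
    have : ∀ h : H, ρ h (S (ρ h⁻¹ v)) = v := by
      intro h
      rw [hSid _ (hA h⁻¹ v hv), ← Module.End.mul_apply, ← map_mul, mul_inv_cancel, map_one]
      rfl
    rw [Finset.sum_congr rfl (fun h _ => this h), Finset.sum_const, Finset.card_univ,
      ← Nat.cast_smul_eq_nsmul k, smul_smul, inv_mul_cancel₀ hc, one_smul]
  have hcomm : ∀ (g : H) (v : V), π (ρ g v) = ρ g (π v) := by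
    intro g v
    rw [hπ]
    simp only [LinearMap.smul_apply, LinearMap.sum_apply, LinearMap.comp_apply, map_smul,
      map_sum]
    congr 1
    refine Fintype.sum_equiv (Equiv.mulLeft g⁻¹) _ _ (fun h => ?_)
    simp only [Equiv.coe_mulLeft]
    have e1 : ρ h⁻¹ (ρ g v) = ρ (h⁻¹ * g) v := by rw [← Module.End.mul_apply, ← map_mul]
    have e2 : (g⁻¹ * h)⁻¹ = h⁻¹ * g := by group
    have e3 : ∀ w, ρ g (ρ (g⁻¹ * h) w) = ρ h w := by
      intro w; rw [← Module.End.mul_apply, ← map_mul]; congr 1; group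
    rw [e1, e2, e3]
  refine ⟨LinearMap.ker π ⊓ B, ?_, inf_le_right, ?_, ?_⟩
  · rintro h v ⟨hv1, hv2⟩
    refine ⟨?_, hB h v hv2⟩
    have : π (ρ h v) = ρ h (π v) := hcomm h v
    rw [LinearMap.mem_ker.1 hv1, map_zero] at this
    exact LinearMap.mem_ker.2 this
  · apply le_bot_iff.1
    rintro v ⟨hv1, hv2, _⟩
    have : π v = v := hπid v hv1
    rw [LinearMap.mem_ker.1 hv2] at this
    simp [← this]
  · apply le_antisymm (sup_le hAB inf_le_right)
    intro v hv
    have h1 : π v ∈ A := hπA v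
    have h2 : v - π v ∈ LinearMap.ker π ⊓ B := by
      refine ⟨LinearMap.mem_ker.2 ?_, B.sub_mem hv (hAB h1)⟩
      rw [map_sub, hπid _ h1, sub_self]
    have hsum : v = π v + (v - π v) := by abel
    rw [hsum]
    exact Submodule.add_mem_sup h1 h2

/-- conjugation by an element of N preserves membership in N -/
lemma conj_mem_iff {G : Type} [Group G] (N : Subgroup G) {a : G} (ha : a ∈ N) (w : G) :
    a * w * a⁻¹ ∈ N ↔ w ∈ N := by
  constructor
  · intro hw
    have := N.mul_mem (N.mul_mem (N.inv_mem ha) hw) ha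
    have he : a⁻¹ * (a * w * a⁻¹) * a = w := by group
    rwa [he] at this
  · intro hw
    exact N.mul_mem (N.mul_mem ha hw) (N.inv_mem ha)

/-- characters are invariant under conjugation -/
lemma chr_conj {H : Type} [Group H] (r : GFinRep k H) (a b : H) :
    GFinRep.chr k r (a * b * a⁻¹) = GFinRep.chr k r b := by
  unfold GFinRep.chr
  have h1 : r.ρ (a * b * a⁻¹) = r.ρ (a * b) * r.ρ a⁻¹ := by rw [← map_mul]
  have h2 : r.ρ a⁻¹ * r.ρ (a * b) = r.ρ b := by rw [← map_mul]; congr 1; group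
  rw [h1, LinearMap.trace_mul_comm, h2]

/-- the permutation representation on cosets -/
def permRep (k : Type) [Field k] (H : Type) [Group H] (K : Subgroup H) :
    H →* ((H ⧸ K → k) →ₗ[k] (H ⧸ K → k)) where
  toFun n := LinearMap.funLeft k k (fun q => n⁻¹ • q)
  map_one' := by
    apply LinearMap.ext; intro f; funext q
    simp [LinearMap.funLeft]
  map_mul' m n := by
    apply LinearMap.ext; intro f; funext q
    simp [LinearMap.funLeft, mul_smul]

lemma inner_ind_one {G : Type} [Group G] [Fintype G] (N : Subgroup G) (f : ↥N → k) :
    innerCF k G (indCF k G N f) (fun _ => (1:k))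
      = (Nat.card ↥N : k)⁻¹ * ∑ n : ↥N, f n := by
  have hG : (Nat.card G : k) ≠ 0 := by
    rw [Nat.card_eq_fintype_card]; exact Nat.cast_ne_zero.2 Fintype.card_ne_zero
  unfold innerCF indCF
  simp only [mul_one]
  have key : ∀ x : G, ∑ g : G, (if h : x⁻¹ * g * x ∈ N then f ⟨x⁻¹ * g * x, h⟩ else 0)
      = ∑ n : ↥N, f n := by
    intro x
    rw [← sum_dite_mem N f]
    exact Fintype.sum_equiv ((Equiv.mulLeft x⁻¹).trans (Equiv.mulRight x)) _ _ (fun g => rfl)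
  calc (Nat.card G : k)⁻¹ * ∑ g : G, ((Nat.card ↥N : k)⁻¹ *
        ∑ x : G, if h : x⁻¹ * g * x ∈ N then f ⟨x⁻¹ * g * x, h⟩ else 0)
      = (Nat.card G : k)⁻¹ * ((Nat.card ↥N : k)⁻¹ *
        ∑ g : G, ∑ x : G, if h : x⁻¹ * g * x ∈ N then f ⟨x⁻¹ * g * x, h⟩ else 0) := by
        rw [← Finset.mul_sum]
    _ = (Nat.card G : k)⁻¹ * ((Nat.card ↥N : k)⁻¹ *
        ∑ x : G, ∑ g : G, if h : x⁻¹ * g * x ∈ N then f ⟨x⁻¹ * g * x, h⟩ else 0) := by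
        rw [Finset.sum_comm]
    _ = (Nat.card G : k)⁻¹ * ((Nat.card ↥N : k)⁻¹ *
        ∑ _x : G, ∑ n : ↥N, f n) := by
        rw [Finset.sum_congr rfl (fun x _ => key x)]
    _ = (Nat.card ↥N : k)⁻¹ * ∑ n : ↥N, f n := by
        rw [Finset.sum_const, Finset.card_univ, ← Nat.cast_smul_eq_nsmul k, smul_eq_mul,
          ← Nat.card_eq_fintype_card]
        field_simp

end Aux
set_option maxHeartbeats 1000000 in
theorem depth_two_implies_normal_group (k : Type) [Field k] [IsAlgClosed k] [CharZero k]
    (G : Type) [Group G] [Fintype G] (N : Subgroup G)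
    (N₀ : ℕ) (hN₀ : 0 < N₀)
    (h : ∀ (α : ↥N → k) (χ : G → k), IsIrrCharG k α → IsIrrCharG k χ →
      ∀ a b : ℕ,
        innerCF k G (indCF k G N (resCF k G N (indCF k G N α))) χ = (a : k) →
        innerCF k G (indCF k G N α) χ = (b : k) →
        a ≤ N₀ * b) :
    N.Normal := by
  by_contra hnot
  have hnot' : ∃ n₀, n₀ ∈ N ∧ ∃ g₀ : G, g₀ * n₀ * g₀⁻¹ ∉ N := by
    by_contra hc
    push_neg at hc
    exact hnot ⟨fun n hn g => hc n hn g⟩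
  obtain ⟨n₀, hn₀, g₀, hg₀⟩ := hnot'
  classical
  -- the subgroups K_x of N
  set Kx : G → Subgroup ↥N := fun x =>
    Subgroup.comap ((MulAut.conj x).toMonoidHom.comp N.subtype) N with hKxdef
  have memKx : ∀ (x : G) (m : ↥N), m ∈ Kx x ↔ x * ↑m * x⁻¹ ∈ N := by
    intro x m
    rw [hKxdef]
    rfl
  have hn₀K : (⟨n₀, hn₀⟩ : ↥N) ∉ Kx g₀ := fun hmem => hg₀ ((memKx g₀ _).1 hmem)
  set Kg : Subgroup ↥N := Kx g₀ with hKgdef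
  -- the permutation representation of N on N/Kg
  set Q := (↥N ⧸ Kg) with hQdef
  set ρp : ↥N →* ((Q → k) →ₗ[k] (Q → k)) := permRep k ↥N Kg with hρp
  have ρp_apply : ∀ (n : ↥N) (f : Q → k) (q : Q), ρp n f q = f (n⁻¹ • q) := fun _ _ _ => rfl
  -- the summation functional and its kernel
  set Sfun : (Q → k) →ₗ[k] k := ∑ q : Q, LinearMap.proj q with hSfundef
  have Sfun_apply : ∀ f : Q → k, Sfun f = ∑ q : Q, f q := by
    intro f
    rw [hSfundef, LinearMap.sum_apply]
    rfl
  set Wm : Submodule k (Q → k) := LinearMap.ker Sfun with hWmdef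
  have hcQ : (Fintype.card Q : k) ≠ 0 := Nat.cast_ne_zero.2 Fintype.card_ne_zero
  have hWinv : ∀ n : ↥N, ∀ v ∈ Wm, ρp n v ∈ Wm := by
    intro n v hv
    have hSg : Sfun (ρp n v) = Sfun v := by
      rw [Sfun_apply, Sfun_apply]
      exact Fintype.sum_equiv (MulAction.toPerm (n⁻¹ : ↥N)) _ _ (fun q => rfl)
    rw [hWmdef, LinearMap.mem_ker] at *
    rw [hSg, hv]
  -- fixed vectors in Wm are zero
  have hfixW : ∀ v : Q → k, (∀ n : ↥N, ρp n v = v) → v ∈ Wm → v = 0 := by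
    intro v hfix hker
    have hconst : ∀ q : Q, v q = v (QuotientGroup.mk 1) := by
      intro q
      induction q using QuotientGroup.induction_on with
      | H a =>
        have h1 : (ρp a⁻¹ v) (QuotientGroup.mk (1 : ↥N)) = v (QuotientGroup.mk a) := by
          rw [ρp_apply]
          congr 1
          rw [inv_inv]
          show _ = _
          exact congrArg QuotientGroup.mk (mul_one a).symm ▸ rfl
        rw [hfix a⁻¹] at h1
        exact h1.symm
    have h1 : Sfun v = (Fintype.card Q : k) * v (QuotientGroup.mk 1) := by
      rw [Sfun_apply, Finset.sum_congr rfl (fun q _ => hconst q), Finset.sum_const,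
        Finset.card_univ, nsmul_eq_mul]
    rw [LinearMap.mem_ker.1 hker] at h1
    have hv1 : v (QuotientGroup.mk 1) = 0 := by
      rcases mul_eq_zero.1 h1.symm with h' | h'
      · exact absurd h' hcQ
      · exact h'
    funext q
    rw [hconst q, hv1]
    rfl
  -- the element w₀
  set q1 : Q := QuotientGroup.mk 1 with hq1def
  set w₀ : Q → k := ((fun q => if q = q1 then (1:k) else 0) : Q → k)
    - (Fintype.card Q : k)⁻¹ • ((fun _ => (1:k)) : Q → k) with hw₀def
  have hQnontriv : Nontrivial Q := by
    refine ⟨q1, QuotientGroup.mk ⟨n₀, hn₀⟩, fun he => ?_⟩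
    rw [hq1def] at he
    have := QuotientGroup.eq.1 he
    rw [inv_one, one_mul] at this
    exact hn₀K this
  have hQ2 : 1 < Fintype.card Q := Fintype.one_lt_card
  have hw₀ne : w₀ ≠ 0 := by
    intro hw
    have h1 : w₀ q1 = 0 := by rw [hw]; rfl
    rw [hw₀def] at h1
    simp only [Pi.sub_apply, Pi.smul_apply, if_pos rfl, smul_eq_mul, mul_one] at h1
    rw [sub_eq_zero] at h1
    have h3 : (Fintype.card Q : k) = 1 := inv_eq_one.1 h1.symm
    have h4 : Fintype.card Q = 1 := Nat.cast_inj.1 (by rw [h3, Nat.cast_one])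
    omega
  have hw₀W : w₀ ∈ Wm := by
    rw [hWmdef, LinearMap.mem_ker, hw₀def, map_sub, map_smul, Sfun_apply, Sfun_apply]
    rw [Finset.sum_ite_eq' Finset.univ q1 (fun _ => (1:k))]
    simp only [Finset.mem_univ, if_true, Finset.sum_const, Finset.card_univ, nsmul_eq_mul,
      mul_one, smul_eq_mul]
    rw [inv_mul_cancel₀ hcQ, sub_self]
  have hw₀K : ∀ m ∈ Kg, ρp m w₀ = w₀ := by
    intro m hm
    have hiff : ∀ q : Q, (m⁻¹ • q = q1 ↔ q = q1) := by
      intro q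
      induction q using QuotientGroup.induction_on with
      | H a =>
        show (QuotientGroup.mk (m⁻¹ * a) = QuotientGroup.mk 1 ↔ _)
        rw [hq1def, QuotientGroup.eq, QuotientGroup.eq]
        rw [mul_one, mul_one, mul_inv_rev, inv_inv]
        exact mul_mem_cancel_right hm
    funext q
    rw [ρp_apply, hw₀def]
    simp only [Pi.sub_apply, Pi.smul_apply, smul_eq_mul, mul_one]
    rw [if_congr (hiff q) rfl rfl]
  -- the minimal invariant subspace with K-fixed vectors
  set fixedK : (Q → k) → Prop := fun v => ∀ m ∈ Kg, ρp m v = v with hfixedKdef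
  set S : Set (Submodule k (Q → k)) := {P | P ≤ Wm ∧ (∀ n : ↥N, ∀ v ∈ P, ρp n v ∈ P)
    ∧ ∃ v ∈ P, fixedK v ∧ v ≠ 0} with hSdef
  have hWS : Wm ∈ S := ⟨le_rfl, hWinv, w₀, hw₀W, hw₀K, hw₀ne⟩
  have hex : ∃ n : ℕ, ∃ P ∈ S, Module.finrank k P = n := ⟨_, Wm, hWS, rfl⟩
  obtain ⟨U, hUS, hUrank⟩ := Nat.find_spec hex
  have hUmin : ∀ P ∈ S, P ≤ U → P = U := by
    intro P hP hPU
    have h1 : Nat.find hex ≤ Module.finrank k P := Nat.find_min' hex ⟨P, hP, rfl⟩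
    exact Submodule.eq_of_le_of_finrank_le hPU (by rw [hUrank]; exact h1)
  obtain ⟨hUW, hUinv, w₁, hw₁U, hw₁K, hw₁ne⟩ := hUS
  -- the restricted representation on U
  set ρU : ↥N →* (↥U →ₗ[k] ↥U) :=
    { toFun := fun n => (ρp n).restrict (fun v hv => hUinv n v hv),
      map_one' := by
        apply LinearMap.ext; intro v
        apply Subtype.ext
        simp [LinearMap.restrict_apply],
      map_mul' := fun m n => by
        apply LinearMap.ext; intro v
        apply Subtype.ext
        simp [LinearMap.restrict_apply] } with hρUdef
  have ρU_coe : ∀ (n : ↥N) (v : ↥U), (↑(ρU n v) : Q → k) = ρp n ↑v := fun _ _ => rfl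
  set rU : GFinRep k ↥N := { V := ↥U, ρ := ρU } with hrUdef
  set α : ↥N → k := GFinRep.chr k rU with hαdef
  -- irreducibility of rU
  have hUnebot : U ≠ ⊥ := by
    intro hbot
    rw [hbot, Submodule.mem_bot] at hw₁U
    exact hw₁ne hw₁U
  have hirr : GFinRep.IsIrred k rU := by
    constructor
    · exact Submodule.nontrivial_iff_ne_bot.2 hUnebot
    · intro W' hW'inv
      set P : Submodule k (Q → k) := W'.map U.subtype with hPdef
      have hPU : P ≤ U := Submodule.map_subtype_le U W'
      have hPinv : ∀ n : ↥N, ∀ v ∈ P, ρp n v ∈ P := by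
        rintro n v ⟨u, hu, rfl⟩
        exact ⟨ρU n u, hW'inv n u hu, rfl⟩
      obtain ⟨C, hCinv, hCU, hPC, hPCsup⟩ :=
        maschke_rel ρp P U hPinv (fun n v hv => hUinv n v hv) hPU
      have hw₁PC : w₁ ∈ P ⊔ C := by rw [hPCsup]; exact hw₁U
      obtain ⟨p, hp, c, hc, hpc⟩ := Submodule.mem_sup.1 hw₁PC
      have hdec : ∀ m ∈ Kg, ρp m p = p ∧ ρp m c = c := by
        intro m hm
        have h1 : ρp m p + ρp m c = p + c := by
          rw [← map_add, hpc, hw₁K m hm]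
        have h3 : ρp m p - p - (c - ρp m c) = (ρp m p + ρp m c) - (p + c) := by abel
        rw [h1, sub_self] at h3
        have h2 : ρp m p - p = c - ρp m c := sub_eq_zero.1 h3
        have hmem : ρp m p - p ∈ P ⊓ C :=
          ⟨P.sub_mem (hPinv m p hp) hp, by rw [h2]; exact C.sub_mem hc (hCinv m c hc)⟩
        rw [hPC, Submodule.mem_bot] at hmem
        constructor
        · exact sub_eq_zero.1 hmem
        · rw [hmem] at h2
          exact (sub_eq_zero.1 h2.symm).symm
      rcases eq_or_ne p 0 with hp0 | hp0
      · have hcne : c ≠ 0 := by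
          intro hc0
          rw [hp0, hc0, add_zero] at hpc
          exact hw₁ne hpc.symm
        have hCS : C ∈ S := ⟨hCU.trans hUW, hCinv, c, hc, fun m hm => (hdec m hm).2, hcne⟩
        have hCeq : C = U := hUmin C hCS hCU
        have hPbot : P = ⊥ := by
          have := hPC
          rw [hCeq, inf_eq_left.2 hPU] at this
          exact this
        left
        apply Submodule.map_injective_of_injective U.injective_subtype
        rw [Submodule.map_bot]
        exact hPbot
      · right
        have hPS : P ∈ S := ⟨hPU.trans hUW, hPinv, p, hp, fun m hm => (hdec m hm).1, hp0⟩
        have hPeq : P = U := hUmin P hPS hPU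
        apply Submodule.map_injective_of_injective U.injective_subtype
        rw [Submodule.map_top, Submodule.range_subtype]
        exact hPeq
  have hαirr : IsIrrCharG k α := ⟨rU, hirr, rfl⟩
  -- the trivial character of G
  set rT : GFinRep k G := { V := k, ρ := 1 } with hrTdef
  have hχtriv : GFinRep.chr k rT = fun _ : G => (1:k) := by
    funext g
    show LinearMap.trace k k ((1 : G →* (k →ₗ[k] k)) g) = 1
    rw [MonoidHom.one_apply]
    rw [LinearMap.trace_one]
    simp
  have hχirr : IsIrrCharG k (fun _ : G => (1:k)) := by
    refine ⟨rT, ⟨?_, ?_⟩, hχtriv.symm⟩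
    · exact inferInstanceAs (Nontrivial k)
    · intro W _
      rcases eq_or_ne W ⊥ with hW | hW
      · exact Or.inl hW
      · right
        obtain ⟨x, hxW, hx0⟩ := Submodule.exists_mem_ne_zero_of_ne_bot hW
        rw [Submodule.eq_top_iff']
        intro y
        have : y = (y * x⁻¹) • x := by
          simp [smul_eq_mul]
          exact (inv_mul_cancel_right₀ (show (x : k) ≠ 0 from hx0) (y : k)).symm
        rw [this]
        exact W.smul_mem _ hxW
  -- cardinality facts
  have hNcard : (Nat.card ↥N : k) ≠ 0 := by
    rw [Nat.card_eq_fintype_card]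
    exact Nat.cast_ne_zero.2 Fintype.card_ne_zero
  -- b-side : multiplicity of Ind α on trivial is 0
  have hfixU : fixPts ρU = ⊥ := by
    rw [eq_bot_iff]
    intro u hu
    have h1 : ∀ n : ↥N, ρp n ↑u = ↑u := by
      intro n
      rw [← ρU_coe, hu n]
    have h2 : (↑u : Q → k) = 0 := hfixW ↑u h1 (hUW u.2)
    rw [Submodule.mem_bot]
    exact Subtype.ext h2
  have hb : innerCF k G (indCF k G N α) (fun _ => (1:k)) = ((0 : ℕ) : k) := by
    rw [inner_ind_one]
    have hs : ∑ n : ↥N, α n = 0 := by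
      have hst := sum_trace_eq ρU
      rw [hfixU, finrank_bot, Nat.cast_zero, mul_zero] at hst
      exact hst
    rw [hs, mul_zero, Nat.cast_zero]
  -- a-side
  -- the double coset action
  letI dact : MulAction (↥N × ↥N) G :=
    { smul := fun p x => ↑p.1 * x * (↑p.2)⁻¹,
      one_smul := fun x => by
        show ↑(1 : ↥N) * x * (↑(1 : ↥N))⁻¹ = x
        simp,
      mul_smul := fun p q x => by
        show ↑(p.1 * q.1) * x * (↑(p.2 * q.2))⁻¹
          = ↑p.1 * (↑q.1 * x * (↑q.2)⁻¹) * (↑p.2)⁻¹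
        push_cast
        group }
  have smul_def : ∀ (p : ↥N × ↥N) (x : G), p • x = ↑p.1 * x * (↑p.2)⁻¹ := fun _ _ => rfl
  set T : G → k := fun x => ∑ m : ↥N, (if m ∈ Kx x then α m else 0) with hTdef
  set nn : G → ℕ := fun x => Module.finrank k (fixPts (ρU.comp (Kx x).subtype)) with hnndef
  -- T x = |Kx x| * nn x
  have hTnn : ∀ x : G, T x = (Fintype.card ↥(Kx x) : k) * (nn x : k) := by
    intro x
    have h1 : T x = ∑ m' : ↥(Kx x), α ↑m' := by
      rw [show T x = ∑ m : ↥N, (if m ∈ Kx x then α m else 0) from rfl,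
        ← sum_dite_mem (Kx x) (fun m' : ↥(Kx x) => α ↑m')]
      refine Finset.sum_congr rfl (fun m _ => ?_)
      split_ifs <;> rfl
    have h2 : ∀ m' : ↥(Kx x), α ↑m' = LinearMap.trace k ↥U ((ρU.comp (Kx x).subtype) m') :=
      fun m' => rfl
    rw [h1, Finset.sum_congr rfl (fun m' _ => h2 m')]
    exact sum_trace_eq (ρU.comp (Kx x).subtype)
  -- invariance of T, |Kx|, nn under the double coset action
  have hmemiff : ∀ (p : ↥N × ↥N) (x : G) (m : ↥N),
      m ∈ Kx (p • x) ↔ (p.2⁻¹ * m * p.2 : ↥N) ∈ Kx x := by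
    intro p x m
    rw [memKx, memKx, smul_def]
    have he : ↑p.1 * x * (↑p.2)⁻¹ * ↑m * (↑p.1 * x * (↑p.2)⁻¹)⁻¹
        = ↑p.1 * (x * (↑p.2⁻¹ * ↑m * ↑p.2 : ↥N) * x⁻¹) * (↑p.1)⁻¹ := by
      push_cast
      group
    rw [he]
    exact conj_mem_iff N p.1.2 _
  have hTinv : ∀ (p : ↥N × ↥N) (x : G), T (p • x) = T x := by
    intro p x
    show (∑ m : ↥N, if m ∈ Kx (p • x) then α m else 0) = ∑ m : ↥N, if m ∈ Kx x then α m else 0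
    refine (Fintype.sum_equiv ((MulAut.conj p.2).toEquiv) _ _ (fun m' => ?_)).symm
    have hmem : ((MulAut.conj p.2).toEquiv m' ∈ Kx (p • x)) ↔ m' ∈ Kx x := by
      rw [hmemiff p x]
      have : (p.2⁻¹ * ((MulAut.conj p.2) m') * p.2 : ↥N) = m' := by
        simp [MulAut.conj_apply]
        group
      rw [show ((MulAut.conj p.2).toEquiv m') = (MulAut.conj p.2) m' from rfl, this]
    have hval : α ((MulAut.conj p.2).toEquiv m') = α m' := by
      show α (p.2 * m' * p.2⁻¹) = α m'
      rw [hαdef]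
      exact chr_conj rU p.2 m'
    rw [← hmem, ← hval]
  have hKcard : ∀ (p : ↥N × ↥N) (x : G),
      Fintype.card ↥(Kx (p • x)) = Fintype.card ↥(Kx x) := by
    intro p x
    refine Fintype.card_congr (Equiv.subtypeEquiv ((MulAut.conj p.2⁻¹).toEquiv) (fun m => ?_))
    have he : ((MulAut.conj p.2⁻¹).toEquiv m) = p.2⁻¹ * m * p.2 := by
      show p.2⁻¹ * m * p.2⁻¹⁻¹ = _
      rw [inv_inv]
    rw [he]
    exact hmemiff p x m
  have hKne : ∀ x : G, (Fintype.card ↥(Kx x) : k) ≠ 0 :=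
    fun x => Nat.cast_ne_zero.2 Fintype.card_ne_zero
  have hnninv : ∀ (p : ↥N × ↥N) (x : G), nn (p • x) = nn x := by
    intro p x
    have h1 := hTnn (p • x)
    rw [hTinv p x, hTnn x, hKcard p x] at h1
    have h2 : ((nn (p • x) : k)) = ((nn x : k)) :=
      mul_left_cancel₀ (hKne x) h1.symm
    exact Nat.cast_injective h2
  -- stabilizer cardinality
  have hstab : ∀ y : G,
      Fintype.card (MulAction.stabilizer (↥N × ↥N) y) = Fintype.card ↥(Kx y) := by
    intro y
    have key : ∀ q : ↥N × ↥N, q ∈ MulAction.stabilizer (↥N × ↥N) y →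
        y * ↑q.2 * y⁻¹ = ↑q.1 := by
      intro q hq
      rw [MulAction.mem_stabilizer_iff, smul_def] at hq
      have h6 : (↑q.1 : G) * y = y * ↑q.2 := by
        have h7 := congrArg (fun z : G => z * (↑q.2 : G)) hq
        simpa [mul_assoc] using h7
      calc y * (↑q.2 : G) * y⁻¹ = ↑q.1 * y * y⁻¹ := by rw [← h6]
        _ = ↑q.1 := by group
    refine Fintype.card_congr
      { toFun := fun p => ⟨p.1.2, by
          rw [memKx, key p.1 p.2]
          exact p.1.1.2⟩,
        invFun := fun m => ⟨(⟨⟨y * ↑↑m * y⁻¹, (memKx y ↑m).1 m.2⟩, ↑m⟩ : ↥N × ↥N), by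
          rw [MulAction.mem_stabilizer_iff, smul_def]
          show y * ↑↑m * y⁻¹ * y * (↑↑m)⁻¹ = y
          group⟩,
        left_inv := by
          intro p
          apply Subtype.ext
          apply Prod.ext
          · exact Subtype.ext (key p.1 p.2)
          · rfl,
        right_inv := fun m => Subtype.ext rfl }
  -- the orbit decomposition
  set oR : Setoid G := MulAction.orbitRel (↥N × ↥N) G with hoRdef
  letI : Setoid G := oR
  have horb : ∀ (x y : G), (⟦x⟧ : Quotient oR) = ⟦y⟧ → ∃ p : ↥N × ↥N, p • y = x := by
    intro x y hxy
    have := Quotient.eq.1 hxy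
    rw [hoRdef] at this
    exact MulAction.mem_orbit_iff.1 (MulAction.orbitRel_apply.1 this)
  have hfibsum : ∀ q : Quotient oR,
      ∑ x ∈ Finset.univ.filter (fun x => (⟦x⟧ : Quotient oR) = q), T x
        = ((Finset.univ.filter (fun x => (⟦x⟧ : Quotient oR) = q)).card : k) * T q.out := by
    intro q
    rw [Finset.sum_congr rfl (fun x hx => ?_), Finset.sum_const, nsmul_eq_mul]
    have hx' : (⟦x⟧ : Quotient oR) = q := (Finset.mem_filter.1 hx).2
    obtain ⟨p, hp⟩ := horb x q.out (by rw [hx', Quotient.out_eq])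
    rw [← hp, hTinv]
  have hfibcard : ∀ q : Quotient oR,
      (Finset.univ.filter (fun x => (⟦x⟧ : Quotient oR) = q)).card
        * Fintype.card ↥(Kx q.out) = Fintype.card ↥N * Fintype.card ↥N := by
    intro q
    have h1 : (Finset.univ.filter (fun x => (⟦x⟧ : Quotient oR) = q)).card
        = Fintype.card (MulAction.orbit (↥N × ↥N) q.out) := by
      rw [← Fintype.card_subtype]
      refine Fintype.card_congr (Equiv.subtypeEquivRight (fun x => ?_))
      constructor
      · intro hx
        have := horb x q.out (by rw [hx, Quotient.out_eq])
        exact MulAction.mem_orbit_iff.2 this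
      · intro hx
        obtain ⟨p, hp⟩ := MulAction.mem_orbit_iff.1 hx
        have hq : (⟦p • q.out⟧ : Quotient oR) = q := by
          conv_rhs => rw [← Quotient.out_eq q]
          exact Quotient.sound (MulAction.orbitRel_apply.2 (MulAction.mem_orbit _ _))
        rw [hp] at hq
        exact hq
    rw [h1, ← hstab q.out]
    rw [MulAction.card_orbit_mul_card_stabilizer_eq_card_group (↥N × ↥N) q.out]
    exact Fintype.card_prod _ _
  -- put the a-side together
  set A : ℕ := ∑ q : Quotient oR, nn q.out with hAdef
  have hsumT : ∑ x : G, T x = (Fintype.card ↥N : k) * (Fintype.card ↥N : k) * (A : k) := by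
    rw [← Finset.sum_fiberwise (Finset.univ : Finset G) (fun x => (⟦x⟧ : Quotient oR)) T]
    rw [hAdef]
    push_cast
    rw [Finset.mul_sum]
    refine Finset.sum_congr rfl (fun q _ => ?_)
    rw [hfibsum q, hTnn q.out, ← mul_assoc]
    have := hfibcard q
    have h2 : ((Finset.univ.filter (fun x => (⟦x⟧ : Quotient oR) = q)).card : k)
        * (Fintype.card ↥(Kx q.out) : k)
        = (Fintype.card ↥N : k) * (Fintype.card ↥N : k) := by
      rw [← Nat.cast_mul, this, Nat.cast_mul]
    rw [h2]
  have hNQ : (Nat.card ↥N : k) = (Fintype.card ↥N : k) := by rw [Nat.card_eq_fintype_card]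
  -- Claim A3 : the inner sums equal T x
  have hA3 : ∀ x : G,
      ∑ n : ↥N, (if h' : x⁻¹ * ↑n * x ∈ N then α ⟨x⁻¹ * ↑n * x, h'⟩ else 0) = T x := by
    intro x
    rw [← sum_dite_mem N (fun n : ↥N =>
      if h' : x⁻¹ * ↑n * x ∈ N then α ⟨x⁻¹ * ↑n * x, h'⟩ else 0)]
    have hTx : T x = ∑ z : G, (if hz : z ∈ N then
        (if (⟨z, hz⟩ : ↥N) ∈ Kx x then α ⟨z, hz⟩ else 0) else 0) := by
      rw [show T x = ∑ m : ↥N, (if m ∈ Kx x then α m else 0) from rfl]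
      exact (sum_dite_mem N (fun m : ↥N => if m ∈ Kx x then α m else 0)).symm
    rw [hTx]
    refine (Fintype.sum_equiv ((Equiv.mulLeft x).trans (Equiv.mulRight x⁻¹)) _ _
      (fun z => ?_)).symm
    have he : ((Equiv.mulLeft x).trans (Equiv.mulRight x⁻¹)) z = x * z * x⁻¹ := rfl
    rw [he]
    have hz1 : x⁻¹ * (x * z * x⁻¹) * x = z := by group
    by_cases h1 : z ∈ N
    · by_cases h2 : x * z * x⁻¹ ∈ N
      · rw [dif_pos h1, dif_pos h2]
        have h3 : x⁻¹ * ↑(⟨x * z * x⁻¹, h2⟩ : ↥N) * x ∈ N := by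
          show x⁻¹ * (x * z * x⁻¹) * x ∈ N
          rw [hz1]
          exact h1
        rw [dif_pos h3]
        have h4 : (⟨z, h1⟩ : ↥N) ∈ Kx x := by
          rw [memKx]
          exact h2
        rw [if_pos h4]
        congr 1
        exact Subtype.ext hz1.symm
      · rw [dif_pos h1, dif_neg h2]
        have h4 : (⟨z, h1⟩ : ↥N) ∉ Kx x := by
          rw [memKx]
          exact h2
        rw [if_neg h4]
    · by_cases h2 : x * z * x⁻¹ ∈ N
      · rw [dif_neg h1, dif_pos h2]
        have h3 : ¬ (x⁻¹ * ↑(⟨x * z * x⁻¹, h2⟩ : ↥N) * x ∈ N) := by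
          show ¬ (x⁻¹ * (x * z * x⁻¹) * x ∈ N)
          rw [hz1]
          exact h1
        rw [dif_neg h3]
      · rw [dif_neg h1, dif_neg h2]
  -- the value of the a-side inner product
  have ha : innerCF k G (indCF k G N (resCF k G N (indCF k G N α))) (fun _ => (1:k))
      = (A : k) := by
    rw [inner_ind_one]
    have hres : ∀ n : ↥N, resCF k G N (indCF k G N α) n = indCF k G N α ↑n := fun _ => rfl
    rw [Finset.sum_congr rfl (fun n _ => hres n)]
    have hind : ∀ n : ↥N, indCF k G N α ↑n = (Nat.card ↥N : k)⁻¹ *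
        ∑ x : G, (if h' : x⁻¹ * ↑n * x ∈ N then α ⟨x⁻¹ * ↑n * x, h'⟩ else 0) := fun _ => rfl
    rw [Finset.sum_congr rfl (fun n _ => hind n), ← Finset.mul_sum, Finset.sum_comm]
    rw [Finset.sum_congr rfl (fun x _ => hA3 x), hsumT]
    rw [hNQ]
    field_simp
  -- positivity of A
  have hpos : 1 ≤ A := by
    have h1 : nn ((⟦g₀⟧ : Quotient oR).out) = nn g₀ := by
      obtain ⟨p, hp⟩ := horb (⟦g₀⟧ : Quotient oR).out g₀ (Quotient.out_eq _)
      rw [← hp, hnninv]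
    have h2 : 1 ≤ nn g₀ := by
      rw [hnndef]
      rw [Nat.one_le_iff_ne_zero]
      intro h0
      have hbot : fixPts (ρU.comp (Kx g₀).subtype) = ⊥ := Submodule.finrank_eq_zero.1 h0
      have hu₁ : (⟨w₁, hw₁U⟩ : ↥U) ∈ fixPts (ρU.comp (Kx g₀).subtype) := by
        intro m'
        apply Subtype.ext
        show ρp ↑m' w₁ = w₁
        exact hw₁K ↑m' m'.2
      rw [hbot, Submodule.mem_bot] at hu₁
      exact hw₁ne (by
        have := congrArg (Subtype.val) hu₁
        exact this)
    calc 1 ≤ nn g₀ := h2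
      _ = nn ((⟦g₀⟧ : Quotient oR).out) := h1.symm
      _ ≤ A := by
        rw [hAdef]
        exact Finset.single_le_sum (f := fun q : Quotient oR => nn q.out)
          (fun _ _ => Nat.zero_le _) (Finset.mem_univ _)
  -- conclude
  have hfinal := h α (fun _ => (1:k)) hαirr hχirr A 0 ha hb
  omega
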